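/- (Simon's Absorption Lemma) Let R > 0, p₀ ∈ ℝⁿ × ℝ, A ⊆ ℝⁿ × ℝ convex, and set Ω_ρ(p) := U_ρ(p) ∩ A where U_ρ(p) is the parabolic ball of radius ρ. Let S be a nonnegative, monotone, subadditive set function on the class {Ω_ρ(p) : ρ > 0, p ∈ ℝⁿ × ℝ}. Let k ∈ ℝ, ν ∈ (0,1], θ ∈ (0,1), E > 0. There exist δ(n,θ) > 0 and C = C(n,k,ν,θ) with: if for all Ω_ρ(y) ⊆ Ω_R(p₀) with ρ ≤ νR we have ρᵏ S(Ω_{θρ}(y)) ≤ δ ρᵏ S(Ω_ρ(y)) + E, then Rᵏ S(Ω_{θR}(p₀)) ≤ C E. -/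

import Mathlib

/-- Euclidean norm on `Fin n → ℝ`. -/
noncomputable def enr {n : ℕ} (x : Fin n → ℝ) : ℝ := Real.sqrt (∑ i, (x i) ^ 2)

/-- The parabolic ball `U_ρ(p) = {q : max(|q₁ − p₁|, |q₂ − p₂|^{1/4}) < ρ}`. -/
def pball {n : ℕ} (p : (Fin n → ℝ) × ℝ) (ρ : ℝ) : Set ((Fin n → ℝ) × ℝ) :=
  {q | enr (q.1 - p.1) < ρ ∧ |q.2 - p.2| < ρ ^ 4}

namespace SimonAux

lemma enr_eq_norm {n : ℕ} (x : Fin n → ℝ) :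
    enr x = ‖(WithLp.equiv 2 (Fin n → ℝ)).symm x‖ := by
  rw [EuclideanSpace.norm_eq]
  unfold enr
  congr 1
  refine Finset.sum_congr rfl fun i _ => ?_
  simp [WithLp.equiv_symm_apply, Real.norm_eq_abs, sq_abs]

lemma enr_nonneg {n : ℕ} (x : Fin n → ℝ) : 0 ≤ enr x := Real.sqrt_nonneg _

lemma enr_smul {n : ℕ} (a : ℝ) (x : Fin n → ℝ) : enr (a • x) = |a| * enr x := by
  unfold enr
  simp only [Pi.smul_apply, smul_eq_mul, mul_pow]
  rw [← Finset.mul_sum, Real.sqrt_mul (sq_nonneg a), Real.sqrt_sq_eq_abs]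

lemma enr_triangle {n : ℕ} (x y : Fin n → ℝ) : enr (x + y) ≤ enr x + enr y := by
  rw [enr_eq_norm, enr_eq_norm, enr_eq_norm]
  exact norm_add_le _ _

lemma enr_sub_le {n : ℕ} (x y z : Fin n → ℝ) : enr (x - z) ≤ enr (x - y) + enr (y - z) := by
  have := enr_triangle (x - y) (y - z)
  rwa [sub_add_sub_cancel] at this

lemma abs_apply_le_enr {n : ℕ} (x : Fin n → ℝ) (i : Fin n) : |x i| ≤ enr x := by
  unfold enr
  rw [← Real.sqrt_sq_eq_abs]
  apply Real.sqrt_le_sqrt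
  exact Finset.single_le_sum (fun j _ => sq_nonneg (x j)) (Finset.mem_univ i)

def cball {n : ℕ} (p : (Fin n → ℝ) × ℝ) (ρ : ℝ) : Set ((Fin n → ℝ) × ℝ) :=
  {q | enr (q.1 - p.1) ≤ ρ ∧ |q.2 - p.2| ≤ ρ ^ 4}

lemma quart {a s : ℝ} (ha : 0 ≤ a) (hs : 0 ≤ s) : a ^ 4 + s ^ 4 ≤ (a + s) ^ 4 := by
  nlinarith [mul_nonneg ha hs, sq_nonneg a, sq_nonneg s, mul_nonneg (mul_nonneg ha ha) hs,
    mul_nonneg ha (mul_nonneg hs hs), mul_nonneg (mul_nonneg ha ha) (mul_nonneg ha hs),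
    mul_nonneg (mul_nonneg ha hs) (mul_nonneg hs hs), mul_nonneg (mul_nonneg ha ha) (mul_nonneg hs hs)]

lemma pball_subset_cball {n : ℕ} (p : (Fin n → ℝ) × ℝ) (ρ : ℝ) : pball p ρ ⊆ cball p ρ :=
  fun q hq => ⟨le_of_lt hq.1, le_of_lt hq.2⟩

lemma pball_mono {n : ℕ} (p : (Fin n → ℝ) × ℝ) {r₁ r₂ : ℝ} (h : 0 ≤ r₁) (h12 : r₁ ≤ r₂) :
    pball p r₁ ⊆ pball p r₂ := fun q hq =>
  ⟨lt_of_lt_of_le hq.1 h12, lt_of_lt_of_le hq.2 (pow_le_pow_left₀ h h12 4)⟩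

lemma cball_mono {n : ℕ} (p : (Fin n → ℝ) × ℝ) {r₁ r₂ : ℝ} (h : 0 ≤ r₁) (h12 : r₁ ≤ r₂) :
    cball p r₁ ⊆ cball p r₂ := fun q hq =>
  ⟨le_trans hq.1 h12, le_trans hq.2 (pow_le_pow_left₀ h h12 4)⟩

lemma cball_trans {n : ℕ} {p z w : (Fin n → ℝ) × ℝ} {a s : ℝ} (ha : 0 ≤ a) (hs : 0 ≤ s)
    (hz : z ∈ cball p a) (hw : w ∈ cball z s) : w ∈ cball p (a + s) := by
  constructor
  · calc enr (w.1 - p.1) ≤ enr (w.1 - z.1) + enr (z.1 - p.1) := enr_sub_le _ _ _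
      _ ≤ s + a := add_le_add hw.1 hz.1
      _ = a + s := add_comm _ _
  · calc |w.2 - p.2| = |(w.2 - z.2) + (z.2 - p.2)| := by ring_nf
      _ ≤ |w.2 - z.2| + |z.2 - p.2| := abs_add_le _ _
      _ ≤ s ^ 4 + a ^ 4 := add_le_add hw.2 hz.2
      _ ≤ (a + s) ^ 4 := by rw [add_comm (s^4)]; exact quart ha hs

lemma pball_cball_trans {n : ℕ} {p z q : (Fin n → ℝ) × ℝ} {a s : ℝ} (ha : 0 ≤ a) (hs : 0 ≤ s)
    (hz : z ∈ cball p a) (hq : q ∈ pball z s) : q ∈ pball p (a + s) := by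
  constructor
  · calc enr (q.1 - p.1) ≤ enr (q.1 - z.1) + enr (z.1 - p.1) := enr_sub_le _ _ _
      _ < s + a := add_lt_add_of_lt_of_le hq.1 hz.1
      _ = a + s := add_comm _ _
  · calc |q.2 - p.2| = |(q.2 - z.2) + (z.2 - p.2)| := by ring_nf
      _ ≤ |q.2 - z.2| + |z.2 - p.2| := abs_add_le _ _
      _ < s ^ 4 + a ^ 4 := add_lt_add_of_lt_of_le hq.2 hz.2
      _ ≤ (a + s) ^ 4 := by rw [add_comm (s^4)]; exact quart ha hs

lemma continuous_enr {n : ℕ} : Continuous (enr : (Fin n → ℝ) → ℝ) := by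
  unfold enr
  exact (continuous_finset_sum _ fun i _ => (continuous_apply i).pow 2).sqrt

lemma isOpen_pball {n : ℕ} (p : (Fin n → ℝ) × ℝ) (ρ : ℝ) : IsOpen (pball p ρ) := by
  have h1 : Continuous fun q : (Fin n → ℝ) × ℝ => enr (q.1 - p.1) :=
    continuous_enr.comp (continuous_fst.sub continuous_const)
  have h2 : Continuous fun q : (Fin n → ℝ) × ℝ => |q.2 - p.2| :=
    (continuous_snd.sub continuous_const).abs
  exact (isOpen_lt h1 continuous_const).inter (isOpen_lt h2 continuous_const)

lemma isCompact_cball_unit {n : ℕ} : IsCompact (cball (0 : (Fin n → ℝ) × ℝ) 1) := by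
  apply Metric.isCompact_of_isClosed_isBounded
  · have h1 : Continuous fun q : (Fin n → ℝ) × ℝ => enr (q.1 - 0) :=
      continuous_enr.comp (continuous_fst.sub continuous_const)
    have h2 : Continuous fun q : (Fin n → ℝ) × ℝ => |q.2 - 0| :=
      (continuous_snd.sub continuous_const).abs
    exact (isClosed_le h1 continuous_const).inter (isClosed_le h2 continuous_const)
  · apply Bornology.IsBounded.subset (Metric.isBounded_closedBall (x := (0 : (Fin n → ℝ) × ℝ)) (r := 1))
    intro q hq
    obtain ⟨hq1, hq2⟩ := hq
    simp only [Prod.fst_zero, Prod.snd_zero, sub_zero] at hq1 hq2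
    simp only [Metric.mem_closedBall, dist_zero_right, Prod.norm_def, sup_le_iff]
    constructor
    · rw [pi_norm_le_iff_of_nonneg (by norm_num)]
      intro i
      exact le_trans (abs_apply_le_enr q.1 i) hq1
    · rw [Real.norm_eq_abs]
      norm_num at hq2
      exact hq2


lemma pcover {n : ℕ} {c : ℝ} (hc : 0 < c) :
    ∃ (M : ℕ) (g : ((Fin n → ℝ) × ℝ) → ℝ → Fin M → ((Fin n → ℝ) × ℝ)),
      ∀ z ρ, 0 < ρ → (∀ j, g z ρ j ∈ cball z ρ) ∧
        cball z ρ ⊆ ⋃ j, pball (g z ρ j) (c * ρ) := by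
  classical
  set K := cball (0 : (Fin n → ℝ) × ℝ) 1 with hKdef
  have hK : IsCompact K := isCompact_cball_unit
  have hself : ∀ q : (Fin n → ℝ) × ℝ, q ∈ pball q c := by
    intro q
    constructor
    · simpa [enr] using hc
    · simpa using pow_pos hc 4
  have hcov : K ⊆ ⋃ w : K, pball (↑w) c := fun q hq => Set.mem_iUnion.2 ⟨⟨q, hq⟩, hself q⟩
  obtain ⟨t, ht⟩ := hK.elim_finite_subcover (fun w : K => pball (↑w) c)
    (fun w => isOpen_pball _ _) hcov
  set f : Fin t.card → ((Fin n → ℝ) × ℝ) :=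
    fun j => (((t.equivFin.symm j : ↥t) : ↥K) : (Fin n → ℝ) × ℝ) with hfdef
  have hfK : ∀ j, enr (f j).1 ≤ 1 ∧ |(f j).2| ≤ 1 := by
    intro j
    obtain ⟨h1, h2⟩ := ((t.equivFin.symm j : ↥t) : ↥K).2
    simp only [Prod.fst_zero, Prod.snd_zero, sub_zero, one_pow] at h1 h2
    exact ⟨h1, h2⟩
  have hfcov : K ⊆ ⋃ j, pball (f j) c := by
    intro q hq
    have h2 := ht hq
    simp only [Set.mem_iUnion] at h2
    obtain ⟨w, hw, hqw⟩ := h2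
    exact Set.mem_iUnion.2 ⟨t.equivFin ⟨w, hw⟩, by
      simpa [hfdef, Equiv.symm_apply_apply] using hqw⟩
  refine ⟨t.card, fun z ρ j => (z.1 + ρ • (f j).1, z.2 + ρ ^ 4 * (f j).2), ?_⟩
  intro z ρ hρ
  have hρ4 : (0:ℝ) < ρ ^ 4 := pow_pos hρ 4
  constructor
  · intro j
    constructor
    · show enr (z.1 + ρ • (f j).1 - z.1) ≤ ρ
      rw [add_sub_cancel_left, enr_smul, abs_of_pos hρ]
      calc ρ * enr (f j).1 ≤ ρ * 1 := mul_le_mul_of_nonneg_left (hfK j).1 hρ.le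
        _ = ρ := mul_one ρ
    · show |z.2 + ρ ^ 4 * (f j).2 - z.2| ≤ ρ ^ 4
      rw [add_sub_cancel_left, abs_mul, abs_of_pos hρ4]
      calc ρ ^ 4 * |(f j).2| ≤ ρ ^ 4 * 1 := mul_le_mul_of_nonneg_left (hfK j).2 hρ4.le
        _ = ρ ^ 4 := mul_one _
  · intro q hq
    set w : (Fin n → ℝ) × ℝ := (ρ⁻¹ • (q.1 - z.1), (q.2 - z.2) / ρ ^ 4) with hwdef
    have hwK : w ∈ K := by
      rw [hKdef]
      constructor
      · show enr (w.1 - (0 : (Fin n → ℝ) × ℝ).1) ≤ 1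
        rw [Prod.fst_zero, sub_zero]
        show enr (ρ⁻¹ • (q.1 - z.1)) ≤ 1
        rw [enr_smul, abs_inv, abs_of_pos hρ]
        calc ρ⁻¹ * enr (q.1 - z.1) ≤ ρ⁻¹ * ρ :=
              mul_le_mul_of_nonneg_left hq.1 (inv_nonneg.2 hρ.le)
          _ = 1 := inv_mul_cancel₀ hρ.ne'
      · show |w.2 - (0 : (Fin n → ℝ) × ℝ).2| ≤ 1 ^ 4
        rw [Prod.snd_zero, sub_zero, one_pow]
        show |(q.2 - z.2) / ρ ^ 4| ≤ 1
        rw [abs_div, abs_of_pos hρ4, div_le_one hρ4]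
        exact hq.2
    obtain ⟨j, hj⟩ := Set.mem_iUnion.1 (hfcov hwK)
    refine Set.mem_iUnion.2 ⟨j, ?_⟩
    have hw1 : ρ • w.1 = q.1 - z.1 := smul_inv_smul₀ hρ.ne' _
    have hw2 : ρ ^ 4 * w.2 = q.2 - z.2 := mul_div_cancel₀ _ hρ4.ne'
    constructor
    · show enr (q.1 - (z.1 + ρ • (f j).1)) < c * ρ
      have heq : q.1 - (z.1 + ρ • (f j).1) = ρ • (w.1 - (f j).1) := by
        rw [smul_sub, hw1]; abel
      rw [heq, enr_smul, abs_of_pos hρ]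
      calc ρ * enr (w.1 - (f j).1) < ρ * c := by
            exact mul_lt_mul_of_pos_left hj.1 hρ
        _ = c * ρ := mul_comm _ _
    · show |q.2 - (z.2 + ρ ^ 4 * (f j).2)| < (c * ρ) ^ 4
      have heq : q.2 - (z.2 + ρ ^ 4 * (f j).2) = ρ ^ 4 * (w.2 - (f j).2) := by
        rw [mul_sub, hw2]; ring
      rw [heq, abs_mul, abs_of_pos hρ4]
      calc ρ ^ 4 * |w.2 - (f j).2| < ρ ^ 4 * c ^ 4 := by
            exact mul_lt_mul_of_pos_left hj.2 hρ4
        _ = (c * ρ) ^ 4 := by ring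

end SimonAux

set_option maxHeartbeats 1600000 in
open SimonAux in
/-- (Simon's Absorption Lemma) For `Ω_ρ(p) := U_ρ(p) ∩ A` with `A` convex and `S` a
nonnegative, monotone, subadditive set function on the truncated parabolic balls:
there is `δ = δ(n,θ) > 0` and, for each `k ∈ ℝ` and `ν ∈ (0,1]`, a constant
`C = C(n,k,ν,θ)` such that whenever `ρ^k S(Ω_{θρ}(y)) ≤ δ ρ^k S(Ω_ρ(y)) + E` for all
`Ω_ρ(y) ⊆ Ω_R(p₀)` with `0 < ρ ≤ νR`, then `R^k S(Ω_{θR}(p₀)) ≤ C E`. -/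
theorem simons_absorption_lemma (n : ℕ) (θ : ℝ) (hθ : θ ∈ Set.Ioo (0:ℝ) 1) :
    ∃ δ > (0:ℝ), ∀ (k ν : ℝ), ν ∈ Set.Ioc (0:ℝ) 1 →
      ∃ C > (0:ℝ),
        ∀ (R : ℝ), 0 < R → ∀ (p₀ : (Fin n → ℝ) × ℝ) (A : Set ((Fin n → ℝ) × ℝ)),
          Convex ℝ A →
          ∀ (S : Set ((Fin n → ℝ) × ℝ) → ℝ) (E : ℝ), 0 < E →
          -- `S` is nonnegative on the class of truncated parabolic balls
          (∀ ρ : ℝ, 0 < ρ → ∀ p, 0 ≤ S (pball p ρ ∩ A)) →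
          -- `S` is monotone on the class
          (∀ ρ₁ ρ₂ : ℝ, 0 < ρ₁ → 0 < ρ₂ → ∀ p₁ p₂,
              pball p₁ ρ₁ ∩ A ⊆ pball p₂ ρ₂ ∩ A →
              S (pball p₁ ρ₁ ∩ A) ≤ S (pball p₂ ρ₂ ∩ A)) →
          -- `S` is subadditive on the class
          (∀ (m : ℕ) (ρ : ℝ), 0 < ρ → ∀ (p : (Fin n → ℝ) × ℝ)
              (ρs : Fin m → ℝ), (∀ i, 0 < ρs i) → ∀ (ps : Fin m → (Fin n → ℝ) × ℝ),
              pball p ρ ∩ A ⊆ ⋃ i, (pball (ps i) (ρs i) ∩ A) →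
              S (pball p ρ ∩ A) ≤ ∑ i, S (pball (ps i) (ρs i) ∩ A)) →
          -- the absorption hypothesis
          (∀ (ρ : ℝ) (y : (Fin n → ℝ) × ℝ), 0 < ρ → ρ ≤ ν * R →
              pball y ρ ∩ A ⊆ pball p₀ R ∩ A →
              ρ ^ k * S (pball y (θ * ρ) ∩ A) ≤ δ * (ρ ^ k * S (pball y ρ ∩ A)) + E) →
          R ^ k * S (pball p₀ (θ * R) ∩ A) ≤ C * E := by
  obtain ⟨hθ0, hθ1⟩ := hθ
  obtain ⟨N1, g1, hg1⟩ := pcover (n := n) hθ0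
  refine ⟨1 / (2 * ((N1:ℝ) + 1)), by positivity, ?_⟩
  set δ := 1 / (2 * ((N1:ℝ) + 1)) with hδdef
  have hδpos : 0 < δ := by positivity
  have hδN1 : δ * (N1:ℝ) ≤ 1 / 2 := by
    rw [hδdef, div_mul_eq_mul_div, one_mul, div_le_div_iff₀ (by positivity) (by norm_num)]
    have := Nat.cast_nonneg (α := ℝ) N1
    nlinarith
  intro k ν hν
  obtain ⟨hν0, hν1⟩ := hν
  obtain ⟨N2, g2, hg2⟩ := pcover (n := n) (c := (1:ℝ)/2) (by norm_num)
  obtain ⟨m, hm⟩ := exists_nat_gt (2 * ((N2:ℝ) + 1) * max 1 ((2:ℝ) ^ k))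
  set β := (N2:ℝ) / 2 ^ m with hβdef
  have h2m : (0:ℝ) < 2 ^ m := by positivity
  have hmax : (1:ℝ) ≤ max 1 ((2:ℝ) ^ k) := le_max_left _ _
  have h2k : (0:ℝ) < (2:ℝ) ^ k := Real.rpow_pos_of_pos (by norm_num) k
  have h2kmax : (2:ℝ) ^ k ≤ max 1 ((2:ℝ) ^ k) := le_max_right _ _
  have hm2' : (m:ℝ) ≤ (2:ℝ) ^ m := by exact_mod_cast (Nat.lt_two_pow_self (n := m)).le
  have hm2 : 2 * ((N2:ℝ) + 1) * max 1 ((2:ℝ) ^ k) < 2 ^ m := lt_of_lt_of_le hm hm2'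
  have hN2nn : (0:ℝ) ≤ (N2:ℝ) := Nat.cast_nonneg _
  have haux : 2 * ((N2:ℝ) + 1) * 1 ≤ 2 * ((N2:ℝ) + 1) * max 1 ((2:ℝ) ^ k) :=
    mul_le_mul_of_nonneg_left hmax (by positivity)
  have haux2 : 2 * ((N2:ℝ) + 1) * (2:ℝ) ^ k ≤ 2 * ((N2:ℝ) + 1) * max 1 ((2:ℝ) ^ k) :=
    mul_le_mul_of_nonneg_left h2kmax (by positivity)
  have hβ0 : 0 ≤ β := by positivity
  have hβhalf : β ≤ 1 / 2 := by
    rw [hβdef, div_le_div_iff₀ h2m (by norm_num)]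
    nlinarith
  have hβk : β * (2:ℝ) ^ k ≤ 1 / 2 := by
    rw [hβdef, div_mul_eq_mul_div, div_le_div_iff₀ h2m (by norm_num)]
    nlinarith
  have h1θ : (0:ℝ) < 1 - θ := by linarith
  set τ := min ν ((1 - θ) / (2 * (m:ℝ) + 2)) with hτdef
  have hτpos : 0 < τ := lt_min hν0 (div_pos h1θ (by positivity))
  have hτν : τ ≤ ν := min_le_left _ _
  have hτθ : (2 * (m:ℝ) + 2) * τ ≤ 1 - θ := by
    have h := min_le_right ν ((1 - θ) / (2 * (m:ℝ) + 2))
    calc (2 * (m:ℝ) + 2) * τ ≤ (2 * (m:ℝ) + 2) * ((1 - θ) / (2 * (m:ℝ) + 2)) :=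
          mul_le_mul_of_nonneg_left h (by positivity)
      _ = 1 - θ := by field_simp
  obtain ⟨N0, g0, hg0⟩ := pcover (n := n) hτpos
  have hτk : 0 < τ ^ (-k) := Real.rpow_pos_of_pos hτpos _
  refine ⟨4 * ((N0:ℝ) + 1) * τ ^ (-k), by positivity, ?_⟩
  intro R hR p₀ A hA S E hE hS0 hSmono hSsub habs
  set σ : ℕ → ℝ := fun i => τ * R / 2 ^ i with hσdef
  have hσpos : ∀ i, 0 < σ i := fun i => div_pos (mul_pos hτpos hR) (by positivity)
  have hσ0 : σ 0 = τ * R := by simp [hσdef]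
  have hσhalf : ∀ i, σ (i + 1) = σ i / 2 := by
    intro i
    show τ * R / 2 ^ (i+1) = τ * R / 2 ^ i / 2
    rw [pow_succ, ← div_div]
  have hσle : ∀ i, σ i ≤ τ * R := by
    intro i
    have h2i : (1:ℝ) ≤ 2 ^ i := by exact_mod_cast Nat.one_le_two_pow
    exact div_le_self (mul_pos hτpos hR).le h2i
  have hσν : ∀ i, σ i ≤ ν * R := fun i =>
    (hσle i).trans (mul_le_mul_of_nonneg_right hτν hR.le)
  have hmarg : ∀ i, (2 * (m:ℝ) + 2) * σ i ≤ (1 - θ) * R := by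
    intro i
    calc (2 * (m:ℝ) + 2) * σ i ≤ (2 * (m:ℝ) + 2) * (τ * R) :=
          mul_le_mul_of_nonneg_left (hσle i) (by positivity)
      _ = ((2 * (m:ℝ) + 2) * τ) * R := by ring
      _ ≤ (1 - θ) * R := mul_le_mul_of_nonneg_right hτθ hR.le
  have hmarg0 : ∀ (i : ℕ) (c : ℝ), 0 ≤ c → c ≤ 2 * (m:ℝ) + 2 → 0 ≤ R - c * σ i := by
    intro i c hc0 hc2
    have h1 : c * σ i ≤ (2 * (m:ℝ) + 2) * σ i := mul_le_mul_of_nonneg_right hc2 (hσpos i).le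
    have h2 : (1 - θ) * R ≤ R := by nlinarith
    linarith [hmarg i]
  set Mstar := S (pball p₀ R ∩ A) with hMdef
  have hMnn : 0 ≤ Mstar := hS0 R hR p₀
  have hEk : ∀ i, 0 ≤ (σ i) ^ (-k) * E :=
    fun i => mul_nonneg (Real.rpow_nonneg (hσpos i).le _) hE.le
  have hsubR : ∀ (i : ℕ) (c s : ℝ) (z : (Fin n → ℝ) × ℝ), 1 ≤ c → c ≤ 2 * (m:ℝ) + 2 →
      0 < s → s ≤ σ i → z ∈ cball p₀ (R - c * σ i) →
      pball z s ∩ A ⊆ pball p₀ R ∩ A := by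
    intro i c s z hc1 hc2 hs0 hsσ hz
    rintro q ⟨hq, hqA⟩
    have h0 : 0 ≤ R - c * σ i := hmarg0 i c (by linarith) hc2
    have h := pball_cball_trans h0 hs0.le hz hq
    have hcσ : σ i ≤ c * σ i := le_mul_of_one_le_left (hσpos i).le hc1
    exact ⟨pball_mono p₀ (by linarith) (by linarith) h, hqA⟩
  have habs' : ∀ (i : ℕ) (z : (Fin n → ℝ) × ℝ), pball z (σ i) ∩ A ⊆ pball p₀ R ∩ A →
      S (pball z (θ * σ i) ∩ A) ≤ δ * S (pball z (σ i) ∩ A) + (σ i) ^ (-k) * E := by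
    intro i z hsub
    have h := habs (σ i) z (hσpos i) (hσν i) hsub
    have hp : (0:ℝ) < (σ i) ^ k := Real.rpow_pos_of_pos (hσpos i) k
    have h2 := mul_le_mul_of_nonneg_left h (inv_nonneg.2 hp.le)
    rw [Real.rpow_neg (hσpos i).le]
    calc S (pball z (θ * σ i) ∩ A)
        = ((σ i) ^ k)⁻¹ * ((σ i) ^ k * S (pball z (θ * σ i) ∩ A)) :=
          (inv_mul_cancel_left₀ hp.ne' _).symm
      _ ≤ ((σ i) ^ k)⁻¹ * (δ * ((σ i) ^ k * S (pball z (σ i) ∩ A)) + E) := h2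
      _ = δ * S (pball z (σ i) ∩ A) + ((σ i) ^ k)⁻¹ * E := by
          field_simp
  have inner : ∀ (i : ℕ) (b : ℝ), 0 ≤ b →
      (∀ z, z ∈ cball p₀ (R - ((m:ℝ) + 2) * σ i) → S (pball z (θ * σ i) ∩ A) ≤ b) →
      ∀ (s : ℕ), s ≤ m → ∀ z, z ∈ cball p₀ (R - ((m:ℝ) + 2 + s) * σ i) →
        S (pball z (θ * σ i) ∩ A) ≤ (1/2 : ℝ) ^ s * b + 2 * ((σ i) ^ (-k) * E) := by
    intro i b hb hbase s
    induction s with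
    | zero =>
      intro _ z hz
      have hz' : z ∈ cball p₀ (R - ((m:ℝ) + 2) * σ i) := by
        have he : R - ((m:ℝ) + 2 + ((0:ℕ):ℝ)) * σ i = R - ((m:ℝ) + 2) * σ i := by
          norm_num
        rwa [he] at hz
      have h1 := hbase z hz'
      simp only [pow_zero, one_mul]
      linarith [hEk i]
    | succ s ih =>
      intro hs z hz
      have hsm : s ≤ m := le_of_lt (Nat.lt_of_lt_of_le (Nat.lt_succ_self s) hs)
      have hsc : (s:ℝ) + 1 ≤ (m:ℝ) := by exact_mod_cast hs
      have hmnn : (0:ℝ) ≤ (m:ℝ) := Nat.cast_nonneg _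
      have hsnn : (0:ℝ) ≤ (s:ℝ) := Nat.cast_nonneg _
      have hz' : z ∈ cball p₀ (R - ((m:ℝ) + 2 + (s:ℝ) + 1) * σ i) := by
        have he : R - ((m:ℝ) + 2 + ((s+1:ℕ):ℝ)) * σ i
            = R - ((m:ℝ) + 2 + (s:ℝ) + 1) * σ i := by push_cast; ring
        rwa [he] at hz
      have hstep := habs' i z (hsubR i ((m:ℝ) + 2 + (s:ℝ) + 1) (σ i) z (by linarith)
        (by linarith) (hσpos i) le_rfl hz')
      obtain ⟨hc_mem, hc_cov⟩ := hg1 z (σ i) (hσpos i)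
      have hcov2 : pball z (σ i) ∩ A ⊆ ⋃ j, (pball (g1 z (σ i) j) (θ * σ i) ∩ A) := by
        rintro q ⟨hq, hqA⟩
        obtain ⟨j, hj⟩ := Set.mem_iUnion.1 (hc_cov (pball_subset_cball _ _ hq))
        exact Set.mem_iUnion.2 ⟨j, hj, hqA⟩
      have hsum := hSsub N1 (σ i) (hσpos i) z (fun _ => θ * σ i)
        (fun _ => mul_pos hθ0 (hσpos i)) (g1 z (σ i)) hcov2
      have hterm : ∀ j : Fin N1, S (pball (g1 z (σ i) j) (θ * σ i) ∩ A) ≤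
          (1/2:ℝ) ^ s * b + 2 * ((σ i) ^ (-k) * E) := by
        intro j
        apply ih hsm
        have hcb := cball_trans (hmarg0 i ((m:ℝ) + 2 + (s:ℝ) + 1) (by linarith) (by linarith))
          (hσpos i).le hz' (hc_mem j)
        have he : R - ((m:ℝ) + 2 + (s:ℝ) + 1) * σ i + σ i
            = R - ((m:ℝ) + 2 + (s:ℝ)) * σ i := by ring
        rw [he] at hcb
        have he2 : R - ((m:ℝ) + 2 + ((s:ℕ):ℝ)) * σ i = R - ((m:ℝ) + 2 + (s:ℝ)) * σ i := by
          push_cast; ring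
        rwa [he2]
      have hX0 : 0 ≤ (1/2:ℝ) ^ s * b + 2 * ((σ i) ^ (-k) * E) := by
        have := hEk i
        positivity
      have hsum2 : S (pball z (σ i) ∩ A) ≤
          (N1:ℝ) * ((1/2:ℝ) ^ s * b + 2 * ((σ i) ^ (-k) * E)) := by
        calc S (pball z (σ i) ∩ A) ≤ ∑ j, S (pball (g1 z (σ i) j) (θ * σ i) ∩ A) := hsum
          _ ≤ ∑ _j : Fin N1, ((1/2:ℝ) ^ s * b + 2 * ((σ i) ^ (-k) * E)) :=
              Finset.sum_le_sum (fun j _ => hterm j)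
          _ = (N1:ℝ) * ((1/2:ℝ) ^ s * b + 2 * ((σ i) ^ (-k) * E)) := by
              rw [Finset.sum_const, Finset.card_univ, Fintype.card_fin, nsmul_eq_mul]
      have hmm : δ * ((N1:ℝ) * ((1/2:ℝ) ^ s * b + 2 * ((σ i) ^ (-k) * E)))
          ≤ (1/2) * ((1/2:ℝ) ^ s * b + 2 * ((σ i) ^ (-k) * E)) := by
        have h3 := mul_le_mul_of_nonneg_right hδN1 hX0
        calc δ * ((N1:ℝ) * ((1/2:ℝ) ^ s * b + 2 * ((σ i) ^ (-k) * E)))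
            = (δ * (N1:ℝ)) * ((1/2:ℝ) ^ s * b + 2 * ((σ i) ^ (-k) * E)) := by ring
          _ ≤ (1/2) * ((1/2:ℝ) ^ s * b + 2 * ((σ i) ^ (-k) * E)) := h3
      calc S (pball z (θ * σ i) ∩ A)
          ≤ δ * S (pball z (σ i) ∩ A) + (σ i) ^ (-k) * E := hstep
        _ ≤ δ * ((N1:ℝ) * ((1/2:ℝ) ^ s * b + 2 * ((σ i) ^ (-k) * E))) + (σ i) ^ (-k) * E :=
            add_le_add_left (mul_le_mul_of_nonneg_left hsum2 hδpos.le) _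
        _ ≤ (1/2) * ((1/2:ℝ) ^ s * b + 2 * ((σ i) ^ (-k) * E)) + (σ i) ^ (-k) * E :=
            add_le_add_left hmm _
        _ = (1/2:ℝ) ^ (s+1) * b + 2 * ((σ i) ^ (-k) * E) := by ring
  have key : ∀ (L : ℕ), ∀ (i : ℕ) (z : (Fin n → ℝ) × ℝ),
      z ∈ cball p₀ (R - (2 * (m:ℝ) + 2) * σ i) →
      S (pball z (θ * σ i) ∩ A) ≤ β ^ L * Mstar + 4 * ((σ i) ^ (-k) * E) := by
    intro L
    induction L with
    | zero =>
      intro i z hz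
      have hθσ : θ * σ i ≤ σ i := mul_le_of_le_one_left (hσpos i).le hθ1.le
      have h1 : S (pball z (θ * σ i) ∩ A) ≤ Mstar :=
        hSmono (θ * σ i) R (mul_pos hθ0 (hσpos i)) hR z p₀
          (hsubR i (2 * (m:ℝ) + 2) (θ * σ i) z (by linarith [Nat.cast_nonneg (α := ℝ) m])
            le_rfl (mul_pos hθ0 (hσpos i)) hθσ hz)
      simp only [pow_zero, one_mul]
      linarith [hEk i]
    | succ L ih =>
      intro i z hz
      have hmnn : (0:ℝ) ≤ (m:ℝ) := Nat.cast_nonneg _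
      set B := β ^ L * Mstar + 4 * ((σ (i+1)) ^ (-k) * E) with hBdef
      have hB0 : 0 ≤ B := by
        have := hEk (i+1)
        have := mul_nonneg (pow_nonneg hβ0 L) hMnn
        rw [hBdef]
        linarith
      have hshr : ∀ z', z' ∈ cball p₀ (R - ((m:ℝ) + 2) * σ i) →
          S (pball z' (θ * σ i) ∩ A) ≤ (N2:ℝ) * B := by
        intro z' hz'
        obtain ⟨hc_mem, hc_cov⟩ := hg2 z' (θ * σ i) (mul_pos hθ0 (hσpos i))
        have hrad : (1/2 : ℝ) * (θ * σ i) = θ * σ (i+1) := by rw [hσhalf i]; ring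
        have hcov2 : pball z' (θ * σ i) ∩ A ⊆
            ⋃ j, (pball (g2 z' (θ * σ i) j) (θ * σ (i+1)) ∩ A) := by
          rintro q ⟨hq, hqA⟩
          obtain ⟨j, hj⟩ := Set.mem_iUnion.1 (hc_cov (pball_subset_cball _ _ hq))
          rw [hrad] at hj
          exact Set.mem_iUnion.2 ⟨j, hj, hqA⟩
        have hsum := hSsub N2 (θ * σ i) (mul_pos hθ0 (hσpos i)) z' (fun _ => θ * σ (i+1))
          (fun _ => mul_pos hθ0 (hσpos (i+1))) (g2 z' (θ * σ i)) hcov2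
        have hterm : ∀ j : Fin N2, S (pball (g2 z' (θ * σ i) j) (θ * σ (i+1)) ∩ A) ≤ B := by
          intro j
          apply ih (i+1)
          have hcb := cball_trans (hmarg0 i ((m:ℝ) + 2) (by linarith) (by linarith))
            (mul_pos hθ0 (hσpos i)).le hz' (hc_mem j)
          have hθσ : θ * σ i ≤ σ i := mul_le_of_le_one_left (hσpos i).le hθ1.le
          have h0 : 0 ≤ R - ((m:ℝ) + 2) * σ i + θ * σ i := by
            have := hmarg0 i ((m:ℝ) + 2) (by linarith) (by linarith)
            have := mul_pos hθ0 (hσpos i)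
            linarith
          have hle : R - ((m:ℝ) + 2) * σ i + θ * σ i ≤ R - (2 * (m:ℝ) + 2) * σ (i+1) := by
            rw [hσhalf i]
            have := (hσpos i).le
            nlinarith
          exact cball_mono p₀ h0 hle hcb
        calc S (pball z' (θ * σ i) ∩ A)
            ≤ ∑ j, S (pball (g2 z' (θ * σ i) j) (θ * σ (i+1)) ∩ A) := hsum
          _ ≤ ∑ _j : Fin N2, B := Finset.sum_le_sum (fun j _ => hterm j)
          _ = (N2:ℝ) * B := by
              rw [Finset.sum_const, Finset.card_univ, Fintype.card_fin, nsmul_eq_mul]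
      have hz2 : z ∈ cball p₀ (R - ((m:ℝ) + 2 + (m:ℕ)) * σ i) := by
        have he : R - ((m:ℝ) + 2 + ((m:ℕ):ℝ)) * σ i = R - (2 * (m:ℝ) + 2) * σ i := by
          push_cast; ring
        rwa [he]
      have h1 := inner i ((N2:ℝ) * B) (mul_nonneg hN2nn hB0) hshr m le_rfl z hz2
      have hβeq : (1/2:ℝ) ^ m * (N2:ℝ) = β := by
        rw [hβdef, div_pow, one_pow]
        field_simp
      have hu' : (σ (i+1)) ^ (-k) = (2:ℝ) ^ k * (σ i) ^ (-k) := by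
        rw [hσhalf i, Real.div_rpow (hσpos i).le (by norm_num : (0:ℝ) ≤ 2),
          Real.rpow_neg (by norm_num : (0:ℝ) ≤ 2) k, div_eq_mul_inv, inv_inv, mul_comm]
      have h2 := mul_le_mul_of_nonneg_right hβk (hEk i)
      calc S (pball z (θ * σ i) ∩ A)
          ≤ (1/2:ℝ) ^ m * ((N2:ℝ) * B) + 2 * ((σ i) ^ (-k) * E) := h1
        _ = β * B + 2 * ((σ i) ^ (-k) * E) := by rw [← mul_assoc, hβeq]
        _ = β ^ (L+1) * Mstar + 4 * (β * (2:ℝ) ^ k) * ((σ i) ^ (-k) * E)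
              + 2 * ((σ i) ^ (-k) * E) := by
            rw [hBdef, hu']; ring
        _ ≤ β ^ (L+1) * Mstar + 4 * ((σ i) ^ (-k) * E) := by nlinarith [hEk i]
  obtain ⟨hc_mem, hc_cov⟩ := hg0 p₀ (θ * R) (mul_pos hθ0 hR)
  have hrad0 : τ * (θ * R) = θ * σ 0 := by rw [hσ0]; ring
  have hcov2 : pball p₀ (θ * R) ∩ A ⊆ ⋃ j, (pball (g0 p₀ (θ * R) j) (θ * σ 0) ∩ A) := by
    rintro q ⟨hq, hqA⟩
    obtain ⟨j, hj⟩ := Set.mem_iUnion.1 (hc_cov (pball_subset_cball _ _ hq))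
    rw [hrad0] at hj
    exact Set.mem_iUnion.2 ⟨j, hj, hqA⟩
  have hsum := hSsub N0 (θ * R) (mul_pos hθ0 hR) p₀ (fun _ => θ * σ 0)
    (fun _ => mul_pos hθ0 (hσpos 0)) (g0 p₀ (θ * R)) hcov2
  have hlim : ∀ j : Fin N0, S (pball (g0 p₀ (θ * R) j) (θ * σ 0) ∩ A) ≤
      4 * ((σ 0) ^ (-k) * E) := by
    intro j
    have hcb : g0 p₀ (θ * R) j ∈ cball p₀ (R - (2 * (m:ℝ) + 2) * σ 0) := by
      refine cball_mono p₀ (mul_pos hθ0 hR).le ?_ (hc_mem j)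
      have := hmarg 0
      linarith
    have hseq : ∀ L : ℕ, S (pball (g0 p₀ (θ * R) j) (θ * σ 0) ∩ A) ≤
        β ^ L * Mstar + 4 * ((σ 0) ^ (-k) * E) := fun L => key L 0 _ hcb
    have ht1 : Filter.Tendsto (fun L : ℕ => β ^ L * Mstar + 4 * ((σ 0) ^ (-k) * E))
        Filter.atTop (nhds (0 * Mstar + 4 * ((σ 0) ^ (-k) * E))) :=
      ((tendsto_pow_atTop_nhds_zero_of_lt_one hβ0
        (lt_of_le_of_lt hβhalf (by norm_num))).mul_const _).add_const _
    have ht2 : Filter.Tendsto (fun L : ℕ => β ^ L * Mstar + 4 * ((σ 0) ^ (-k) * E))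
        Filter.atTop (nhds (4 * ((σ 0) ^ (-k) * E))) := by simpa using ht1
    exact ge_of_tendsto ht2 (Filter.Eventually.of_forall hseq)
  have hfin : S (pball p₀ (θ * R) ∩ A) ≤ (N0:ℝ) * (4 * ((σ 0) ^ (-k) * E)) := by
    calc S (pball p₀ (θ * R) ∩ A)
        ≤ ∑ j, S (pball (g0 p₀ (θ * R) j) (θ * σ 0) ∩ A) := hsum
      _ ≤ ∑ _j : Fin N0, (4 * ((σ 0) ^ (-k) * E)) := Finset.sum_le_sum (fun j _ => hlim j)
      _ = (N0:ℝ) * (4 * ((σ 0) ^ (-k) * E)) := by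
          rw [Finset.sum_const, Finset.card_univ, Fintype.card_fin, nsmul_eq_mul]
  have hRk : (0:ℝ) < R ^ k := Real.rpow_pos_of_pos hR k
  have hRkk : R ^ k * R ^ (-k) = 1 := by
    rw [← Real.rpow_add hR]
    simp
  have hkey : R ^ k * ((σ 0) ^ (-k)) = τ ^ (-k) := by
    rw [hσ0, Real.mul_rpow hτpos.le hR.le]
    calc R ^ k * (τ ^ (-k) * R ^ (-k)) = (R ^ k * R ^ (-k)) * τ ^ (-k) := by ring
      _ = τ ^ (-k) := by rw [hRkk, one_mul]
  have hN0nn : (0:ℝ) ≤ (N0:ℝ) := Nat.cast_nonneg _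
  calc R ^ k * S (pball p₀ (θ * R) ∩ A)
      ≤ R ^ k * ((N0:ℝ) * (4 * ((σ 0) ^ (-k) * E))) := mul_le_mul_of_nonneg_left hfin hRk.le
    _ = ((N0:ℝ) * 4) * (R ^ k * (σ 0) ^ (-k)) * E := by ring
    _ = ((N0:ℝ) * 4) * τ ^ (-k) * E := by rw [hkey]
    _ ≤ 4 * ((N0:ℝ) + 1) * τ ^ (-k) * E := by nlinarith
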